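/- If nonnegative integers n, m, k, d satisfy F_n = 10^d F_m + L_k with d the number of decimal digits of L_k, m ≥ 1, and n - k ≥ 4, then |1 - 10^d / α^(n-m)| < 3/α^(n-k-7), where α = (1+√5)/2. -/

import Mathlib

noncomputable def goldenRatio' : ℝ := (1 + Real.sqrt 5) / 2

def lucas : ℕ → ℕ
  | 0 => 2
  | 1 => 1
  | n + 2 => lucas (n + 1) + lucas n

open goldenRatio in
lemma goldenRatio'_eq : goldenRatio' = φ := rfl

lemma lucas_real_aux (a b : ℝ) (ha : a ^ 2 = a + 1) (hb : b ^ 2 = b + 1)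
    (hab : a + b = 1) : ∀ k, (lucas k : ℝ) = a ^ k + b ^ k
  | 0 => by norm_num [lucas]
  | 1 => by rw [lucas]; push_cast; simp [hab]
  | k + 2 => by
    rw [lucas]
    push_cast
    rw [lucas_real_aux a b ha hb hab (k + 1), lucas_real_aux a b ha hb hab k]
    linear_combination (-(a ^ k)) * ha + (-(b ^ k)) * hb

open goldenRatio in
lemma lucas_real (k : ℕ) : (lucas k : ℝ) = φ ^ k + ψ ^ k :=
  lucas_real_aux φ ψ Real.goldenRatio_sq Real.goldenConj_sq Real.goldenRatio_add_goldenConj k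

lemma lucas_pos : ∀ k, 1 ≤ lucas k
  | 0 => by norm_num [lucas]
  | 1 => by norm_num [lucas]
  | k + 2 => by rw [lucas]; have := lucas_pos k; omega

open goldenRatio in
theorem linear_form_bound (n m k d : ℕ) (hm : 1 ≤ m)
    (hd : d = Nat.log 10 (lucas k) + 1)
    (heq : Nat.fib n = 10 ^ d * Nat.fib m + lucas k)
    (hnk : (4 : ℤ) ≤ (n : ℤ) - k) :
    |1 - (10 : ℝ) ^ d / goldenRatio' ^ ((n : ℤ) - m)| <
      3 / goldenRatio' ^ ((n : ℤ) - k - 7) := by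
  rw [goldenRatio'_eq]
  have hs2 : (2 : ℝ) ≤ Real.sqrt 5 := by
    rw [show (2 : ℝ) = Real.sqrt 4 by
      rw [show (4 : ℝ) = 2 ^ 2 by norm_num, Real.sqrt_sq] <;> norm_num]
    exact Real.sqrt_le_sqrt (by norm_num)
  have hs3 : Real.sqrt 5 < 3 := by
    rw [show (3 : ℝ) = Real.sqrt 9 by
      rw [show (9 : ℝ) = 3 ^ 2 by norm_num, Real.sqrt_sq] <;> norm_num]
    exact Real.sqrt_lt_sqrt (by norm_num) (by norm_num)
  have hφ : (1 : ℝ) < φ := Real.one_lt_goldenRatio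
  have h2a : φ ^ 2 = φ + 1 := Real.goldenRatio_sq
  have hlin : 2 * φ = 1 + Real.sqrt 5 := by rw [Real.goldenRatio]; ring
  have hψabs : |ψ| ≤ 1 := by
    rw [abs_le]
    constructor <;> rw [Real.goldenConj] <;> nlinarith
  have hfibn := Real.coe_fib_eq n
  have hfibm := Real.coe_fib_eq m
  have hluc := lucas_real k
  -- abstract φ ψ √5 as opaque variables
  set a : ℝ := Real.goldenRatio with hadef
  set b : ℝ := Real.goldenConj with hbdef
  set s : ℝ := Real.sqrt 5 with hsdef
  clear_value a b s
  clear hadef hbdef hsdef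
  have hs0 : (0 : ℝ) < s := by linarith
  have hs5 : s ≠ 0 := ne_of_gt hs0
  have ha0 : (0 : ℝ) < a := by linarith
  have hane : a ≠ 0 := ne_of_gt ha0
  -- 10^d ≤ 10 * lucas k
  have h10 : (10 : ℝ) ^ d ≤ 10 * lucas k := by
    have h1 : 10 ^ (Nat.log 10 (lucas k)) ≤ lucas k :=
      Nat.pow_log_le_self 10 (by have := lucas_pos k; omega)
    have : (10 : ℕ) ^ d ≤ 10 * lucas k := by
      rw [hd, pow_succ, mul_comm]; exact Nat.mul_le_mul le_rfl h1
    exact_mod_cast this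
  have h10pos : (0 : ℝ) < 10 ^ d := by positivity
  have hLpos : (1 : ℝ) ≤ (lucas k : ℝ) := by exact_mod_cast lucas_pos k
  -- key identity
  have heqR : (Nat.fib n : ℝ) = 10 ^ d * Nat.fib m + lucas k := by exact_mod_cast heq
  rw [hfibn, hfibm] at heqR
  field_simp at heqR
  have key : (a : ℝ) ^ n - 10 ^ d * a ^ m
      = b ^ n - 10 ^ d * b ^ m + s * lucas k := by
    linear_combination heqR
  -- rewrite LHS
  have hrw : 1 - (10 : ℝ) ^ d / a ^ ((n : ℤ) - m)
      = (b ^ n - 10 ^ d * b ^ m + s * lucas k) / a ^ n := by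
    rw [zpow_sub₀ hane, zpow_natCast, zpow_natCast, ← key]
    field_simp
  -- rewrite RHS
  have hrw2 : (3 : ℝ) / a ^ ((n : ℤ) - k - 7)
      = 3 * a ^ 7 * a ^ k / a ^ n := by
    rw [zpow_sub₀ hane, zpow_sub₀ hane, zpow_natCast, zpow_natCast,
      show ((7 : ℤ)) = ((7 : ℕ) : ℤ) by norm_num, zpow_natCast]
    field_simp
  rw [hrw, hrw2, abs_div, abs_of_pos (pow_pos ha0 n)]
  have hpn : (0 : ℝ) < a ^ n := pow_pos ha0 n
  rw [div_lt_div_iff_of_pos_right hpn]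
  -- bound the numerator
  have hψn : |b ^ n| ≤ 1 := by rw [abs_pow]; exact pow_le_one₀ (abs_nonneg _) hψabs
  have hψm : |b ^ m| ≤ 1 := by rw [abs_pow]; exact pow_le_one₀ (abs_nonneg _) hψabs
  have hpk : (1 : ℝ) ≤ a ^ k := one_le_pow₀ hφ.le
  have hLle : (lucas k : ℝ) ≤ 2 * a ^ k := by
    rw [hluc]
    have h2 : b ^ k ≤ 1 := le_trans (le_abs_self _)
      (by rw [abs_pow]; exact pow_le_one₀ (abs_nonneg _) hψabs)
    linarith
  have hstep : |(10 : ℝ) ^ d * b ^ m| ≤ 10 * lucas k := by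
    rw [abs_mul, abs_of_pos h10pos]
    calc (10 : ℝ) ^ d * |b ^ m| ≤ 10 ^ d * 1 := by gcongr
      _ ≤ 10 * lucas k := by rw [mul_one]; exact h10
  have habs : |b ^ n - 10 ^ d * b ^ m + s * (lucas k : ℝ)|
      ≤ 1 + 10 * lucas k + s * lucas k := by
    calc |b ^ n - 10 ^ d * b ^ m + s * (lucas k : ℝ)|
        ≤ |b ^ n - 10 ^ d * b ^ m| + |s * (lucas k : ℝ)| := abs_add_le _ _
      _ ≤ (|b ^ n| + |(10 : ℝ) ^ d * b ^ m|) + |s * (lucas k : ℝ)| := by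
          gcongr; exact abs_sub _ _
      _ ≤ 1 + 10 * lucas k + s * lucas k := by
          have h3 : |s * (lucas k : ℝ)| = s * lucas k :=
            abs_of_nonneg (by nlinarith)
          rw [h3]
          linarith
  have h7 : (a : ℝ) ^ 7 = 13 * a + 8 := by
    linear_combination (a ^ 5 + a ^ 4 + 2 * a ^ 3 + 3 * a ^ 2 + 5 * a + 8) * h2a
  have hfin : 1 + 10 * (lucas k : ℝ) + s * lucas k < 3 * a ^ 7 * a ^ k := by
    calc 1 + 10 * (lucas k : ℝ) + s * lucas k
        ≤ (11 + s) * lucas k := by nlinarith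
      _ ≤ (11 + s) * (2 * a ^ k) := by gcongr <;> linarith
      _ = (22 + 2 * s) * a ^ k := by ring
      _ < (39 * a + 24) * a ^ k := by
          apply mul_lt_mul_of_pos_right _ (pow_pos ha0 k)
          linarith
      _ = 3 * (13 * a + 8) * a ^ k := by ring
      _ = 3 * a ^ 7 * a ^ k := by rw [h7]
  exact lt_of_le_of_lt habs hfin
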